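/- The independence complex of the path graph L_n (with n+1 vertices and n edges) is contractible if n = 3k, and homotopy equivalent to the sphere S^k if n = 3k+1 or n = 3k+2. -/

import Mathlib

open scoped unitInterval

/-- The defining relation for the topological join of two spaces. -/
inductive JoinRel (X Y : Type*) :
    (X × Y × I) ⊕ (X ⊕ Y) → (X × Y × I) ⊕ (X ⊕ Y) → Prop
  | zero (x : X) (y : Y) : JoinRel X Y (.inl (x, y, 0)) (.inr (.inl x))
  | one (x : X) (y : Y) : JoinRel X Y (.inl (x, y, 1)) (.inr (.inr y))

/-- The topological join `X * Y`. -/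
def TopJoin (X Y : Type*) [TopologicalSpace X] [TopologicalSpace Y] : Type _ :=
  Quot (JoinRel X Y)

instance (X Y : Type*) [TopologicalSpace X] [TopologicalSpace Y] :
    TopologicalSpace (TopJoin X Y) := by
  unfold TopJoin; infer_instance

/-- The inclusion of the first factor into the join. -/
def TopJoin.inl {X Y : Type*} [TopologicalSpace X] [TopologicalSpace Y] (x : X) :
    TopJoin X Y :=
  Quot.mk _ (.inr (.inl x))

/-- The (unreduced) suspension, as the join with a two-point space. -/
def Susp (X : Type*) [TopologicalSpace X] : Type _ := TopJoin X Bool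

instance (X : Type*) [TopologicalSpace X] : TopologicalSpace (Susp X) :=
  inferInstanceAs (TopologicalSpace (TopJoin X Bool))

/-- The north pole of the suspension. -/
def suspApex (X : Type*) [TopologicalSpace X] : Susp X :=
  Quot.mk _ (.inr (.inr true))

/-- The wedge (one-point union) of two pointed spaces. -/
def Wedge (X Y : Type*) [TopologicalSpace X] [TopologicalSpace Y] (x0 : X) (y0 : Y) :
    Type _ :=
  Quot (fun a b : X ⊕ Y => a = Sum.inl x0 ∧ b = Sum.inr y0)

instance (X Y : Type*) [TopologicalSpace X] [TopologicalSpace Y] (x0 : X) (y0 : Y) :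
    TopologicalSpace (Wedge X Y x0 y0) := by
  unfold Wedge; infer_instance

/-- The wedge of a family of pointed spaces. -/
def WedgeFam {ι : Type*} (X : ι → Type*) [∀ i, TopologicalSpace (X i)]
    (pt : ∀ i, X i) : Type _ :=
  Quot (fun a b : Σ i, X i => ∃ i j, a = ⟨i, pt i⟩ ∧ b = ⟨j, pt j⟩)

instance {ι : Type*} (X : ι → Type*) [∀ i, TopologicalSpace (X i)] (pt : ∀ i, X i) :
    TopologicalSpace (WedgeFam X pt) := by
  unfold WedgeFam; infer_instance

/-- The `k`-dimensional sphere. -/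
abbrev nSphere (k : ℕ) : Type :=
  ↥(Metric.sphere (0 : EuclideanSpace ℝ (Fin (k + 1))) 1)

/-- A base point on the `k`-sphere. -/
noncomputable def sphereBase (k : ℕ) : nSphere k :=
  ⟨EuclideanSpace.single 0 1, by
    simp [EuclideanSpace.norm_single]⟩

/-- An abstract simplicial complex on a vertex set `V`. -/
structure AbsSimplicialComplex (V : Type*) where
  faces : Set (Finset V)
  down_closed : ∀ ⦃s⦄, s ∈ faces → ∀ ⦃t : Finset V⦄, t ⊆ s → t ∈ faces

/-- The geometric realization of an abstract simplicial complex, as the space of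
convex-combination weight functions supported on a face. -/
def AbsSimplicialComplex.space {V : Type*} (K : AbsSimplicialComplex V) : Type _ :=
  {f : V → ℝ // (∀ x, 0 ≤ f x) ∧
    ∃ s ∈ K.faces, (∀ x, x ∉ s → f x = 0) ∧ ∑ x ∈ s, f x = 1}

instance {V : Type*} (K : AbsSimplicialComplex V) : TopologicalSpace K.space := by
  unfold AbsSimplicialComplex.space; infer_instance

/-- The independence complex of a graph, restricted to vertices in `A`:
faces are the independent sets of `G` contained in `A`. -/
def indepComplexOn {V : Type*} (G : SimpleGraph V) (A : Set V) :
    AbsSimplicialComplex V where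
  faces := {s | ↑s ⊆ A ∧ ∀ a ∈ s, ∀ b ∈ s, ¬ G.Adj a b}
  down_closed := by
    intro s hs t ht
    exact ⟨fun x hx => hs.1 (ht hx), fun a ha b hb => hs.2 a (ht ha) b (ht hb)⟩

/-- The independence complex of a graph. -/
def indepComplex {V : Type*} (G : SimpleGraph V) : AbsSimplicialComplex V :=
  indepComplexOn G Set.univ

/-- The closed star of a vertex: the vertex together with its neighbors. -/
def stSet {V : Type*} (G : SimpleGraph V) (v : V) : Set V :=
  insert v (G.neighborSet v)

lemma indepComplexOn_mono {V : Type*} (G : SimpleGraph V) {A B : Set V} (h : A ⊆ B) :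
    (indepComplexOn G A).faces ⊆ (indepComplexOn G B).faces :=
  fun _ hs => ⟨fun x hx => h (hs.1 hx), hs.2⟩

/-- The inclusion of the realization of a subcomplex. -/
def inclMap {V : Type*} (K L : AbsSimplicialComplex V) (h : K.faces ⊆ L.faces) :
    C(K.space, L.space) where
  toFun := fun f => ⟨f.1, f.2.1, by
    obtain ⟨s, hs, h2⟩ := f.2.2
    exact ⟨s, h hs, h2⟩⟩
  continuous_toFun := Continuous.subtype_mk continuous_subtype_val _
/-- The cone over `K` with apex `v`, inside the same vertex set. -/
def coneAt {V : Type*} [DecidableEq V] (v : V) (K : AbsSimplicialComplex V) :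
    AbsSimplicialComplex V where
  faces := {s | s.erase v ∈ K.faces}
  down_closed := by
    intro s hs t ht
    exact K.down_closed hs (Finset.erase_subset_erase _ ht)

/-- The cone over `K` with a fresh apex vertex `none`. -/
def coneVertex {V : Type*} (K : AbsSimplicialComplex V) :
    AbsSimplicialComplex (Option V) where
  faces := {s | Finset.eraseNone s ∈ K.faces}
  down_closed := by
    intro s hs t ht
    refine K.down_closed hs ?_
    intro x hx
    rw [Finset.mem_eraseNone] at hx ⊢
    exact ht hx

/-- The join of two simplicial complexes on disjoint vertex sets. -/
def complexJoin {V W : Type*} (K : AbsSimplicialComplex V)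
    (L : AbsSimplicialComplex W) : AbsSimplicialComplex (V ⊕ W) where
  faces := {s | s.toLeft ∈ K.faces ∧ s.toRight ∈ L.faces}
  down_closed := by
    intro s hs t ht
    constructor
    · refine K.down_closed hs.1 ?_
      intro x hx; rw [Finset.mem_toLeft] at hx ⊢; exact ht hx
    · refine L.down_closed hs.2 ?_
      intro x hx; rw [Finset.mem_toRight] at hx ⊢; exact ht hx

/-- The disjoint union of two graphs. -/
def graphSum {V W : Type*} (G : SimpleGraph V) (H : SimpleGraph W) :
    SimpleGraph (V ⊕ W) where
  Adj a b :=
    match a, b with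
    | .inl x, .inl y => G.Adj x y
    | .inr x, .inr y => H.Adj x y
    | _, _ => False
  symm := ⟨by rintro (x | x) (y | y) h; exacts [G.adj_symm h, h.elim, h.elim, H.adj_symm h]⟩
  loopless := ⟨by rintro (x | x) h; exacts [G.irrefl h, H.irrefl h]⟩

/-- The subcomplex `A_u = I_{G - st(u)} * u` of the independence complex:
simplices `σ` with `σ ∪ {u}` independent. -/
def Afan {V : Type*} [DecidableEq V] (G : SimpleGraph V) (u : V) :
    AbsSimplicialComplex V where
  faces := {s | ∀ a ∈ insert u s, ∀ b ∈ insert u s, ¬ G.Adj a b}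
  down_closed := by
    intro s hs t ht a ha b hb
    exact hs a (Finset.insert_subset_insert u ht ha) b (Finset.insert_subset_insert u ht hb)

/-- The join of a complex with the full simplex on the vertex set `s`. -/
def joinSimplex {V : Type*} [DecidableEq V] (s : Finset V)
    (K : AbsSimplicialComplex V) : AbsSimplicialComplex V where
  faces := {t | t \ s ∈ K.faces}
  down_closed := by
    intro t ht r hr
    exact K.down_closed ht (Finset.sdiff_subset_sdiff hr (subset_refl s))

/-- The complex `K(G, v)` of Theorem 6.4: independent sets of `G - st(v)`
missing `W_u = lk(u) - v` entirely, for at least one neighbor `u` of `v`. -/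
def Kcomplex {V : Type*} (G : SimpleGraph V) (v : V) : AbsSimplicialComplex V where
  faces := {s | s ∈ (indepComplexOn G (stSet G v)ᶜ).faces ∧
      ∃ u, G.Adj v u ∧ ∀ w ∈ s, ¬ (G.Adj u w ∧ w ≠ v)}
  down_closed := by
    intro s hs t ht
    refine ⟨(indepComplexOn G (stSet G v)ᶜ).down_closed hs.1 ht, ?_⟩
    obtain ⟨u, hu, hw⟩ := hs.2
    exact ⟨u, hu, fun w hwt => hw w (ht hwt)⟩

/-- Auxiliary relation for subdividing the edge `uv` into a path of four edges
through three new vertices `0, 1, 2`. -/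
def sRel {V : Type*} (G : SimpleGraph V) (u v : V) :
    V ⊕ Fin 3 → V ⊕ Fin 3 → Prop
  | .inl x, .inl y => G.Adj x y ∧ ¬((x = u ∧ y = v) ∨ (x = v ∧ y = u))
  | .inl x, .inr i => (x = u ∧ i = 0) ∨ (x = v ∧ i = 2)
  | .inr i, .inr j => (i : ℕ) + 1 = (j : ℕ)
  | .inr _, .inl _ => False

/-- The graph obtained from `G` by replacing the edge `uv` by the path
`u - 0 - 1 - 2 - v` of four edges. -/
def subdivide4 {V : Type*} (G : SimpleGraph V) (u v : V) :
    SimpleGraph (V ⊕ Fin 3) where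
  Adj a b := sRel G u v a b ∨ sRel G u v b a
  symm := ⟨fun _ _ (h : _ ∨ _) => h.symm⟩
  loopless := ⟨by
    rintro (x | i) h
    · rcases h with h | h <;> exact G.irrefl h.1
    · rcases h with h | h <;> (simp only [sRel] at h; omega)⟩

lemma stSet_compl_subset {V : Type*} (G : SimpleGraph V) (v : V) :
    (stSet G v)ᶜ ⊆ ({v} : Set V)ᶜ :=
  Set.compl_subset_compl.mpr fun x hx => by
    rw [Set.mem_singleton_iff] at hx
    rw [hx]
    exact Set.mem_insert v _

/-- The inclusion of the realization of `I_{G - st(v)}` into that of `I_{G - v}`. -/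
def linkIncl {V : Type*} (G : SimpleGraph V) (v : V) :
    C((indepComplexOn G (stSet G v)ᶜ).space, (indepComplexOn G ({v} : Set V)ᶜ).space) :=
  inclMap _ _ (indepComplexOn_mono G (stSet_compl_subset G v))
section Aux

open Finset

/-- Spaces of complexes with equal face sets are homeomorphic. -/
def spaceCongr {V : Type*} (K L : AbsSimplicialComplex V) (h : K.faces = L.faces) :
    K.space ≃ₜ L.space where
  toFun f := ⟨f.1, f.2.1, by obtain ⟨s, hs, h2⟩ := f.2.2; rw [h] at hs; exact ⟨s, hs, h2⟩⟩
  invFun f := ⟨f.1, f.2.1, by obtain ⟨s, hs, h2⟩ := f.2.2; rw [← h] at hs; exact ⟨s, hs, h2⟩⟩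
  left_inv f := rfl
  right_inv f := rfl
  continuous_toFun := Continuous.subtype_mk continuous_subtype_val _
  continuous_invFun := Continuous.subtype_mk continuous_subtype_val _

variable {V : Type*} [DecidableEq V]

/-- Move the mass at `w` over to `u`. -/
noncomputable def shiftFun (u w : V) (f : V → ℝ) : V → ℝ :=
  fun x => if x = w then 0 else if x = u then f u + f w else f x

lemma shiftFun_eq (u w : V) (huw : u ≠ w) (f : V → ℝ) (x : V) :
    shiftFun u w f x = f x + (if x = u then f w else 0) - (if x = w then f w else 0) := by
  unfold shiftFun
  split_ifs with h1 h2 h2 <;> simp_all <;> ring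

lemma shiftFun_nonneg (u w : V) (f : V → ℝ) (hf : ∀ x, 0 ≤ f x) (x : V) :
    0 ≤ shiftFun u w f x := by
  unfold shiftFun
  split_ifs <;> [exact le_refl 0; exact add_nonneg (hf u) (hf w); exact hf x]

lemma shiftFun_sum (u w : V) (huw : u ≠ w) (f : V → ℝ) {s : Finset V}
    (hus : u ∈ s) (hws : w ∈ s) :
    ∑ x ∈ s, shiftFun u w f x = ∑ x ∈ s, f x := by
  simp only [shiftFun_eq u w huw f]
  rw [Finset.sum_sub_distrib, Finset.sum_add_distrib, Finset.sum_ite_eq' s u,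
    Finset.sum_ite_eq' s w, if_pos hus, if_pos hws]
  ring

variable {G : SimpleGraph V} {A : Set V} {u w : V}

lemma insert_indep (hu : u ∈ A) (hadj : ¬ G.Adj u w)
    (hdom : ∀ x ∈ A, G.Adj u x → G.Adj w x) {s : Finset V}
    (hs : s ∈ (indepComplexOn G A).faces) (hws : w ∈ s) :
    insert u s ∈ (indepComplexOn G A).faces := by
  obtain ⟨hsA, hind⟩ := hs
  have key : ∀ c ∈ s, ¬ G.Adj u c := by
    intro c hc hadj'
    by_cases hcw : c = w
    · exact hadj (hcw ▸ hadj')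
    · exact hind w hws c hc (hdom c (hsA (Finset.mem_coe.mpr hc)) hadj')
  constructor
  · intro x hx
    rcases Finset.mem_insert.mp (Finset.mem_coe.mp hx) with hx | hx
    · exact hx ▸ hu
    · exact hsA (Finset.mem_coe.mpr hx)
  · intro a ha b hb hab
    rcases Finset.mem_insert.mp ha with ha' | ha' <;>
      rcases Finset.mem_insert.mp hb with hb' | hb'
    · subst ha'; subst hb'; exact G.irrefl hab
    · subst ha'; exact key b hb' hab
    · subst hb'; exact key a ha' (G.adj_symm hab)
    · exact hind a ha' b hb' hab

lemma shiftFun_of_w_eq_zero (huw : u ≠ w) {f : V → ℝ} (hw : f w = 0) :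
    shiftFun u w f = f := by
  funext x
  simp only [shiftFun]
  split_ifs with h1 h2
  · rw [h1, hw]
  · rw [h2, hw, add_zero]
  · rfl

/-- The straight-line homotopy from the shifted map to the identity stays in the complex. -/
lemma homotopy_mem (hu : u ∈ A) (huw : u ≠ w) (hadj : ¬ G.Adj u w)
    (hdom : ∀ x ∈ A, G.Adj u x → G.Adj w x)
    (f : (indepComplexOn G A).space) (t : ℝ) (ht0 : 0 ≤ t) (ht1 : t ≤ 1) :
    (∀ x, 0 ≤ (1 - t) * shiftFun u w f.1 x + t * f.1 x) ∧
    ∃ s ∈ (indepComplexOn G A).faces,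
      (∀ x, x ∉ s → (1 - t) * shiftFun u w f.1 x + t * f.1 x = 0) ∧
      ∑ x ∈ s, ((1 - t) * shiftFun u w f.1 x + t * f.1 x) = 1 := by
  obtain ⟨hpos, s, hsF, hz, hsum⟩ := f.2
  refine ⟨fun x => add_nonneg (mul_nonneg (by linarith) (shiftFun_nonneg u w f.1 hpos x))
    (mul_nonneg ht0 (hpos x)), ?_⟩
  by_cases hw : f.1 w = 0
  · have hsh := shiftFun_of_w_eq_zero huw hw
    refine ⟨s, hsF, fun x hx => ?_, ?_⟩
    · rw [hsh, hz x hx]; ring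
    · simp only [hsh]
      rw [Finset.sum_congr rfl (fun x _ => by ring : ∀ x ∈ s,
        (1 - t) * f.1 x + t * f.1 x = f.1 x), hsum]
  · have hws : w ∈ s := by by_contra h; exact hw (hz w h)
    refine ⟨insert u s, insert_indep hu hadj hdom hsF hws, fun x hx => ?_, ?_⟩
    · have hxu : x ≠ u := fun h => hx (h ▸ Finset.mem_insert_self u s)
      have hxs : x ∉ s := fun h => hx (Finset.mem_insert_of_mem h)
      have hxw : x ≠ w := fun h => hxs (h ▸ hws)
      have : shiftFun u w f.1 x = f.1 x := by
        simp only [shiftFun, if_neg hxw, if_neg hxu]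
      rw [this, hz x hxs]; ring
    · have h1 : ∑ x ∈ insert u s, f.1 x = 1 := by
        by_cases hus : u ∈ s
        · rw [Finset.insert_eq_self.mpr hus, hsum]
        · rw [Finset.sum_insert hus, hz u hus, zero_add, hsum]
      have h2 : ∑ x ∈ insert u s, shiftFun u w f.1 x = 1 := by
        rw [shiftFun_sum u w huw f.1 (Finset.mem_insert_self u s)
          (Finset.mem_insert_of_mem hws), h1]
      rw [Finset.sum_add_distrib, ← Finset.mul_sum, ← Finset.mul_sum, h1, h2]
      ring

/-- The shifted map lives in the complex with `w` removed. -/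
lemma shift_mem (hu : u ∈ A) (huw : u ≠ w) (hadj : ¬ G.Adj u w)
    (hdom : ∀ x ∈ A, G.Adj u x → G.Adj w x) (f : (indepComplexOn G A).space) :
    (∀ x, 0 ≤ shiftFun u w f.1 x) ∧
    ∃ s ∈ (indepComplexOn G (A \ {w})).faces,
      (∀ x, x ∉ s → shiftFun u w f.1 x = 0) ∧ ∑ x ∈ s, shiftFun u w f.1 x = 1 := by
  obtain ⟨hpos, s, hsF, hz, hsum⟩ := f.2
  refine ⟨shiftFun_nonneg u w f.1 hpos, ?_⟩
  by_cases hw : f.1 w = 0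
  · have hsh := shiftFun_of_w_eq_zero huw hw
    refine ⟨s.erase w, ⟨?_, ?_⟩, fun x hx => ?_, ?_⟩
    · intro x hx
      obtain ⟨hxw, hxs⟩ := Finset.mem_erase.mp (Finset.mem_coe.mp hx)
      exact ⟨hsF.1 (Finset.mem_coe.mpr hxs), hxw⟩
    · intro a ha b hb
      exact hsF.2 a (Finset.erase_subset w s ha) b (Finset.erase_subset w s hb)
    · rw [hsh]
      by_cases hxw : x = w
      · exact hxw ▸ hw
      · exact hz x (fun h => hx (Finset.mem_erase.mpr ⟨hxw, h⟩))
    · rw [hsh, Finset.sum_erase s hw, hsum]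
  · have hws : w ∈ s := by by_contra h; exact hw (hz w h)
    have hins := insert_indep hu hadj hdom hsF hws
    refine ⟨(insert u s).erase w, ⟨?_, ?_⟩, fun x hx => ?_, ?_⟩
    · intro x hx
      obtain ⟨hxw, hxs⟩ := Finset.mem_erase.mp (Finset.mem_coe.mp hx)
      exact ⟨hins.1 (Finset.mem_coe.mpr hxs), hxw⟩
    · intro a ha b hb
      exact hins.2 a (Finset.erase_subset w _ ha) b (Finset.erase_subset w _ hb)
    · by_cases hxw : x = w
      · simp [shiftFun, hxw]
      · have hxi : x ∉ insert u s := fun h => hx (Finset.mem_erase.mpr ⟨hxw, h⟩)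
        have hxu : x ≠ u := fun h => hxi (h ▸ Finset.mem_insert_self u s)
        have hxs : x ∉ s := fun h => hxi (Finset.mem_insert_of_mem h)
        simp only [shiftFun, if_neg hxw, if_neg hxu]
        exact hz x hxs
    · have hw0 : shiftFun u w f.1 w = 0 := by simp [shiftFun]
      rw [Finset.sum_erase _ hw0,
        shiftFun_sum u w huw f.1 (Finset.mem_insert_self u s)
          (Finset.mem_insert_of_mem hws)]
      by_cases hus : u ∈ s
      · rw [Finset.insert_eq_self.mpr hus, hsum]
      · rw [Finset.sum_insert hus, hz u hus, zero_add, hsum]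

lemma eval_cont {V : Type*} (K : AbsSimplicialComplex V) (x : V) :
    Continuous fun f : K.space => f.1 x :=
  (continuous_apply x).comp continuous_subtype_val

/-- The retraction map, as a continuous map. -/
noncomputable def shiftMap (G : SimpleGraph V) (A : Set V) (u w : V)
    (hu : u ∈ A) (huw : u ≠ w) (hadj : ¬ G.Adj u w)
    (hdom : ∀ x ∈ A, G.Adj u x → G.Adj w x) :
    C((indepComplexOn G A).space, (indepComplexOn G (A \ {w})).space) where
  toFun f := ⟨shiftFun u w f.1, shift_mem hu huw hadj hdom f⟩
  continuous_toFun := by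
    refine Continuous.subtype_mk (continuous_pi fun x => ?_) _
    simp only [shiftFun]
    split_ifs
    · exact continuous_const
    · exact (eval_cont _ u).add (eval_cont _ w)
    · exact eval_cont _ x

/-- The dominated-vertex homotopy equivalence: if `u ∈ A` dominates `w` within `A`,
then deleting `w` does not change the homotopy type of the independence complex. -/
noncomputable def dominatedEquiv (G : SimpleGraph V) (A : Set V) (u w : V)
    (hu : u ∈ A) (huw : u ≠ w) (hadj : ¬ G.Adj u w)
    (hdom : ∀ x ∈ A, G.Adj u x → G.Adj w x) :
    ContinuousMap.HomotopyEquiv (indepComplexOn G A).space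
      (indepComplexOn G (A \ {w})).space where
  toFun := shiftMap G A u w hu huw hadj hdom
  invFun := inclMap _ _ (indepComplexOn_mono G Set.diff_subset)
  left_inv := by
    refine ⟨⟨⟨fun p => ⟨fun x => (1 - (p.1 : ℝ)) * shiftFun u w p.2.1 x + (p.1 : ℝ) * p.2.1 x,
      homotopy_mem hu huw hadj hdom p.2 p.1 p.1.2.1 p.1.2.2⟩, ?_⟩, ?_, ?_⟩⟩
    · refine Continuous.subtype_mk (continuous_pi fun x => ?_) _
      have hc : Continuous fun p : I × (indepComplexOn G A).space => (p.1 : ℝ) :=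
        continuous_subtype_val.comp continuous_fst
      refine ((continuous_const.sub hc).mul ?_).add (hc.mul ?_)
      · simp only [shiftFun]
        split_ifs
        · exact continuous_const
        · exact ((eval_cont _ u).add (eval_cont _ w)).comp continuous_snd
        · exact (eval_cont _ x).comp continuous_snd
      · exact (eval_cont _ x).comp continuous_snd
    · intro f
      apply Subtype.ext
      funext x
      show (1 - ((0 : I) : ℝ)) * shiftFun u w f.1 x + ((0 : I) : ℝ) * f.1 x = _
      simp
      rfl
    · intro f
      apply Subtype.ext
      funext x
      show (1 - ((1 : I) : ℝ)) * shiftFun u w f.1 x + ((1 : I) : ℝ) * f.1 x = f.1 x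
      simp
  right_inv := by
    have heq : (shiftMap G A u w hu huw hadj hdom).comp
        (inclMap _ _ (indepComplexOn_mono G Set.diff_subset)) =
        ContinuousMap.id (indepComplexOn G (A \ {w})).space := by
      ext f
      apply Subtype.ext
      funext x
      obtain ⟨hpos, s, hsF, hz, hsum⟩ := f.2
      have hfw : f.1 w = 0 := by
        refine hz w fun hws => ?_
        exact (hsF.1 (Finset.mem_coe.mpr hws)).2 rfl
      show shiftFun u w f.1 x = f.1 x
      rw [shiftFun_of_w_eq_zero huw hfw]
    rw [heq]

/-- A complex with a vertex `v ∈ A` isolated within `A` is a cone, hence contractible. -/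
lemma isolated_contractible (G : SimpleGraph V) (A : Set V) (v : V) (hv : v ∈ A)
    (hiso : ∀ x ∈ A, ¬ G.Adj v x) : ContractibleSpace (indepComplexOn G A).space := by
  have hδ : (∀ x, 0 ≤ (fun x => if x = v then (1:ℝ) else 0) x) ∧
      ∃ s ∈ (indepComplexOn G A).faces,
        (∀ x, x ∉ s → (if x = v then (1:ℝ) else 0) = 0) ∧
        ∑ x ∈ s, (if x = v then (1:ℝ) else 0) = 1 := by
    refine ⟨fun x => by simp only; split_ifs <;> norm_num, {v}, ⟨?_, ?_⟩, fun x hx => ?_, ?_⟩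
    · intro x hx
      rw [Finset.coe_singleton, Set.mem_singleton_iff] at hx
      exact hx ▸ hv
    · intro a ha b hb
      rw [Finset.mem_singleton] at ha hb
      subst ha; subst hb
      exact fun h => G.irrefl h
    · rw [Finset.mem_singleton] at hx
      exact if_neg hx
    · simp
  set δ : (indepComplexOn G A).space := ⟨fun x => if x = v then (1:ℝ) else 0, hδ⟩
  have key : ∀ (f : (indepComplexOn G A).space) (t : ℝ), 0 ≤ t → t ≤ 1 →
      (∀ x, 0 ≤ (1 - t) * f.1 x + t * δ.1 x) ∧
      ∃ s ∈ (indepComplexOn G A).faces,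
        (∀ x, x ∉ s → (1 - t) * f.1 x + t * δ.1 x = 0) ∧
        ∑ x ∈ s, ((1 - t) * f.1 x + t * δ.1 x) = 1 := by
    intro f t ht0 ht1
    obtain ⟨hpos, s, hsF, hz, hsum⟩ := f.2
    refine ⟨fun x => add_nonneg (mul_nonneg (by linarith) (hpos x))
      (mul_nonneg ht0 (δ.2.1 x)), insert v s, ⟨?_, ?_⟩, fun x hx => ?_, ?_⟩
    · intro x hx
      rcases Finset.mem_insert.mp (Finset.mem_coe.mp hx) with hx | hx
      · exact hx ▸ hv
      · exact hsF.1 (Finset.mem_coe.mpr hx)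
    · intro a ha b hb hab
      rcases Finset.mem_insert.mp ha with ha' | ha' <;>
        rcases Finset.mem_insert.mp hb with hb' | hb'
      · subst ha'; subst hb'; exact G.irrefl hab
      · subst ha'; exact hiso b (hsF.1 (Finset.mem_coe.mpr hb')) hab
      · subst hb'; exact hiso a (hsF.1 (Finset.mem_coe.mpr ha')) (G.adj_symm hab)
      · exact hsF.2 a ha' b hb' hab
    · have hxv : x ≠ v := fun h => hx (h ▸ Finset.mem_insert_self v s)
      have hxs : x ∉ s := fun h => hx (Finset.mem_insert_of_mem h)
      show (1 - t) * f.1 x + t * (if x = v then (1:ℝ) else 0) = 0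
      rw [if_neg hxv, hz x hxs]; ring
    · have h1 : ∑ x ∈ insert v s, f.1 x = 1 := by
        by_cases hvs : v ∈ s
        · rw [Finset.insert_eq_self.mpr hvs, hsum]
        · rw [Finset.sum_insert hvs, hz v hvs, zero_add, hsum]
      have h2 : ∑ x ∈ insert v s, δ.1 x = 1 := by
        show ∑ x ∈ insert v s, (if x = v then (1:ℝ) else 0) = 1
        rw [Finset.sum_ite_eq' (insert v s) v (fun _ => (1:ℝ)),
          if_pos (Finset.mem_insert_self v s)]
      rw [Finset.sum_add_distrib, ← Finset.mul_sum, ← Finset.mul_sum, h1, h2]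
      ring
  rw [contractible_iff_id_nullhomotopic]
  refine ⟨δ, ⟨⟨⟨fun p => ⟨fun x => (1 - (p.1 : ℝ)) * p.2.1 x + (p.1 : ℝ) * δ.1 x,
    key p.2 p.1 p.1.2.1 p.1.2.2⟩, ?_⟩, ?_, ?_⟩⟩⟩
  · refine Continuous.subtype_mk (continuous_pi fun x => ?_) _
    have hc : Continuous fun p : I × (indepComplexOn G A).space => (p.1 : ℝ) :=
      continuous_subtype_val.comp continuous_fst
    exact ((continuous_const.sub hc).mul ((eval_cont _ x).comp continuous_snd)).add
      (hc.mul continuous_const)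
  · intro f
    apply Subtype.ext
    funext x
    show (1 - ((0 : I) : ℝ)) * f.1 x + ((0 : I) : ℝ) * δ.1 x = f.1 x
    simp
  · intro f
    apply Subtype.ext
    funext x
    show (1 - ((1 : I) : ℝ)) * f.1 x + ((1 : I) : ℝ) * δ.1 x = δ.1 x
    simp

end Aux

section Chain

open SimpleGraph

/-- Vertices remaining after removing the first `j` vertices congruent to 2 mod 3. -/
def Aset (N j : ℕ) : Set (Fin N) := {m | ∀ i, i < j → (m : ℕ) ≠ 3 * i + 2}

lemma Aset_zero (N : ℕ) : Aset N 0 = Set.univ := by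
  ext m; simp [Aset]

lemma Aset_succ (N j : ℕ) (h : 3 * j + 2 < N) :
    Aset N j \ {(⟨3 * j + 2, h⟩ : Fin N)} = Aset N (j + 1) := by
  ext m
  simp only [Aset, Set.mem_diff, Set.mem_singleton_iff, Set.mem_setOf_eq]
  constructor
  · rintro ⟨h1, h2⟩ i hi
    rcases Nat.lt_succ_iff_lt_or_eq.mp hi with hi | rfl
    · exact h1 i hi
    · intro hm; exact h2 (Fin.ext hm)
  · intro h1
    refine ⟨fun i hi => h1 i (hi.trans (Nat.lt_succ_self j)), fun he => ?_⟩
    exact h1 j (Nat.lt_succ_self j) (by rw [he])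

/-- One step of the reduction: remove the vertex `3j+2`, which is dominated by `3j`. -/
noncomputable def stepEquiv (N j : ℕ) (h : 3 * j + 2 < N) :
    ContinuousMap.HomotopyEquiv (indepComplexOn (pathGraph N) (Aset N j)).space
      (indepComplexOn (pathGraph N) (Aset N (j + 1))).space := by
  have hu : (⟨3 * j, by omega⟩ : Fin N) ∈ Aset N j := by
    intro i _ hc
    simp only at hc
    omega
  have huw : (⟨3 * j, by omega⟩ : Fin N) ≠ ⟨3 * j + 2, h⟩ := by
    intro hc
    have := Fin.mk.injEq (3 * j) (by omega : 3 * j < N) (3 * j + 2) h ▸ hc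
    omega
  have hadj : ¬ (pathGraph N).Adj ⟨3 * j, by omega⟩ ⟨3 * j + 2, h⟩ := by
    rw [pathGraph_adj]
    simp only
    omega
  have hdom : ∀ x ∈ Aset N j, (pathGraph N).Adj ⟨3 * j, by omega⟩ x →
      (pathGraph N).Adj ⟨3 * j + 2, h⟩ x := by
    intro x hx hadj'
    rw [pathGraph_adj] at hadj' ⊢
    simp only at hadj' ⊢
    rcases hadj' with h' | h'
    · right; omega
    · exfalso
      exact hx (j - 1) (by omega) (by omega)
  exact (dominatedEquiv (pathGraph N) (Aset N j) ⟨3 * j, by omega⟩ ⟨3 * j + 2, h⟩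
      hu huw hadj hdom).trans
    (spaceCongr _ _ (by rw [Aset_succ N j h])).toHomotopyEquiv

/-- The composite reduction. -/
noncomputable def chainEquiv (N : ℕ) : (j : ℕ) → (∀ i, i < j → 3 * i + 2 < N) →
    ContinuousMap.HomotopyEquiv (indepComplex (pathGraph N)).space
      (indepComplexOn (pathGraph N) (Aset N j)).space
  | 0, _ => (spaceCongr _ _ (by rw [indepComplex, Aset_zero])).toHomotopyEquiv
  | j + 1, h => (chainEquiv N j fun i hi => h i (hi.trans (Nat.lt_succ_self j))).trans
      (stepEquiv N j (h j (Nat.lt_succ_self j)))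

end Chain

section Sphere

open Finset SimpleGraph

variable {N k : ℕ}

/-- Vertices not congruent to 2 mod 3. -/
def modSet (N : ℕ) : Set (Fin N) := {m | (m : ℕ) % 3 ≠ 2}

lemma Aset_eq_mod (N j : ℕ) (hj : ∀ i, 3 * i + 2 < N → i < j) :
    Aset N j = modSet N := by
  ext m
  simp only [Aset, modSet, Set.mem_setOf_eq]
  constructor
  · intro h hm2
    have hm := m.isLt
    exact h ((m : ℕ) / 3) (hj _ (by omega)) (by omega)
  · intro h i _ hm
    apply h
    omega

/-- The ℓ¹-norm on Euclidean space. -/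
noncomputable def l1 (y : EuclideanSpace ℝ (Fin (k + 1))) : ℝ := ∑ i, |y i|

lemma l1_nonneg (y : EuclideanSpace ℝ (Fin (k + 1))) : 0 ≤ l1 y :=
  Finset.sum_nonneg fun i _ => abs_nonneg _

lemma l1_pos {y : EuclideanSpace ℝ (Fin (k + 1))} (hy : y ≠ 0) : 0 < l1 y := by
  rcases (show ∃ i, y i ≠ 0 by by_contra h; push_neg at h; exact hy (PiLp.ext fun i => by simp [h i])) with ⟨i, hi⟩
  refine Finset.sum_pos' (fun j _ => abs_nonneg _) ⟨i, Finset.mem_univ i, ?_⟩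
  exact abs_pos.mpr hi

lemma l1_smul (c : ℝ) (y : EuclideanSpace ℝ (Fin (k + 1))) : l1 (c • y) = |c| * l1 y := by
  simp only [l1, Finset.mul_sum]
  refine Finset.sum_congr rfl fun i _ => ?_
  show |(c • y) i| = |c| * |y i|
  rw [PiLp.smul_apply, smul_eq_mul, abs_mul]

lemma max_add_max_neg (a : ℝ) : max a 0 + max (-a) 0 = |a| := by
  rcases le_total 0 a with h | h
  · rw [max_eq_left h, max_eq_right (neg_nonpos.mpr h), abs_of_nonneg h, add_zero]
  · rw [max_eq_right h, max_eq_left (neg_nonneg.mpr h), abs_of_nonpos h, zero_add]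

lemma max_sub_max_neg (a : ℝ) : max a 0 - max (-a) 0 = a := by
  rcases le_total 0 a with h | h
  · rw [max_eq_left h, max_eq_right (neg_nonpos.mpr h), sub_zero]
  · rw [max_eq_right h, max_eq_left (neg_nonneg.mpr h), zero_sub, neg_neg]

lemma sum3 (g : ℕ → ℝ) : ∀ m : ℕ, ∑ j ∈ Finset.range (3 * m), g j =
    ∑ i ∈ Finset.range m, (g (3 * i) + g (3 * i + 1) + g (3 * i + 2))
  | 0 => by simp
  | m + 1 => by
    have h3 : 3 * (m + 1) = 3 * m + 1 + 1 + 1 := by ring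
    rw [h3, Finset.sum_range_succ, Finset.sum_range_succ, Finset.sum_range_succ,
      Finset.sum_range_succ, sum3 g m]
    have h4 : 3 * m + 1 + 1 = 3 * m + 2 := by ring
    rw [h4]
    ring

lemma sum_pairs (h1 : 3 * k + 2 ≤ N) (h2 : N ≤ 3 * k + 3) (f : Fin N → ℝ)
    (hz2 : ∀ m : Fin N, (m : ℕ) % 3 = 2 → f m = 0) :
    ∑ i : Fin (k + 1), (f ⟨3 * i.val, by have := i.isLt; omega⟩ +
      f ⟨3 * i.val + 1, by have := i.isLt; omega⟩) = ∑ m, f m := by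
  set g : ℕ → ℝ := fun j => if h : j < N then f ⟨j, h⟩ else 0 with hg
  have step1 : ∑ m, f m = ∑ j ∈ Finset.range N, g j := by
    rw [← Fin.sum_univ_eq_sum_range g N]
    refine Finset.sum_congr rfl fun m _ => ?_
    show f m = if h : (m : ℕ) < N then f ⟨(m : ℕ), h⟩ else 0
    rw [dif_pos m.isLt, Fin.eta]
  have step2 : ∑ j ∈ Finset.range N, g j = ∑ j ∈ Finset.range (3 * (k + 1)), g j := by
    refine Finset.sum_subset (Finset.range_subset_range.mpr (by omega)) fun x _ hx => ?_
    rw [Finset.mem_range] at hx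
    exact dif_neg (by omega)
  have step3 := sum3 g (k + 1)
  have step4 : ∀ i ∈ Finset.range (k + 1), g (3 * i) + g (3 * i + 1) + g (3 * i + 2) =
      g (3 * i) + g (3 * i + 1) := by
    intro i _
    have : g (3 * i + 2) = 0 := by
      by_cases h : 3 * i + 2 < N
      · rw [hg]
        simp only [dif_pos h]
        exact hz2 ⟨3 * i + 2, h⟩ (show (3 * i + 2) % 3 = 2 by omega)
      · exact dif_neg h
    rw [this, add_zero]
  have step5 : ∑ j ∈ Finset.range (k + 1), (g (3 * j) + g (3 * j + 1)) =
      ∑ i : Fin (k + 1), (g (3 * i.val) + g (3 * i.val + 1)) :=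
    (Fin.sum_univ_eq_sum_range (fun j => g (3 * j) + g (3 * j + 1)) (k + 1)).symm
  rw [step1, step2, step3, Finset.sum_congr rfl step4, step5]
  refine Finset.sum_congr rfl fun i _ => ?_
  rw [hg]
  simp only [dif_pos (by have := i.isLt; omega : 3 * i.val < N),
    dif_pos (by have := i.isLt; omega : 3 * i.val + 1 < N)]

lemma space_zero_mod2 (f : (indepComplexOn (pathGraph N) (modSet N)).space)
    (m : Fin N) (hm : (m : ℕ) % 3 = 2) : f.1 m = 0 := by
  obtain ⟨_, s, hsF, hz, _⟩ := f.2
  refine hz m fun hms => ?_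
  exact hsF.1 (Finset.mem_coe.mpr hms) hm

lemma space_pair_zero (h1 : 3 * k + 2 ≤ N)
    (f : (indepComplexOn (pathGraph N) (modSet N)).space) (i : Fin (k + 1)) :
    f.1 ⟨3 * i.val, by have := i.isLt; omega⟩ = 0 ∨
    f.1 ⟨3 * i.val + 1, by have := i.isLt; omega⟩ = 0 := by
  obtain ⟨_, s, hsF, hz, _⟩ := f.2
  by_cases ha : (⟨3 * i.val, by have := i.isLt; omega⟩ : Fin N) ∈ s
  · by_cases hb : (⟨3 * i.val + 1, by have := i.isLt; omega⟩ : Fin N) ∈ s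
    · exfalso
      refine hsF.2 _ ha _ hb ?_
      rw [pathGraph_adj]
      left; rfl
    · exact Or.inr (hz _ hb)
  · exact Or.inl (hz _ ha)

lemma space_sum_univ (f : (indepComplexOn (pathGraph N) (modSet N)).space) :
    ∑ m, f.1 m = 1 := by
  obtain ⟨_, s, _, hz, hsum⟩ := f.2
  exact (Finset.sum_subset (Finset.subset_univ s) fun x _ hx => hz x hx).symm.trans hsum

/-- The coordinate-difference vector of a point of the complex. -/
noncomputable def xvec (h1 : 3 * k + 2 ≤ N)
    (f : (indepComplexOn (pathGraph N) (modSet N)).space) :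
    EuclideanSpace ℝ (Fin (k + 1)) :=
  WithLp.toLp 2 fun i : Fin (k + 1) => f.1 ⟨3 * i.val, by have := i.isLt; omega⟩ -
    f.1 ⟨3 * i.val + 1, by have := i.isLt; omega⟩

lemma l1_xvec (h1 : 3 * k + 2 ≤ N) (h2 : N ≤ 3 * k + 3)
    (f : (indepComplexOn (pathGraph N) (modSet N)).space) : l1 (xvec h1 f) = 1 := by
  have habs : ∀ i : Fin (k + 1), |xvec h1 f i| =
      f.1 ⟨3 * i.val, by have := i.isLt; omega⟩ +
      f.1 ⟨3 * i.val + 1, by have := i.isLt; omega⟩ := by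
    intro i
    rcases space_pair_zero h1 f i with h | h
    · rw [show xvec h1 f i = _ - _ from rfl, h, zero_sub, abs_neg,
        abs_of_nonneg (f.2.1 _), zero_add]
    · rw [show xvec h1 f i = _ - _ from rfl, h, sub_zero,
        abs_of_nonneg (f.2.1 _), add_zero]
  rw [l1, Finset.sum_congr rfl fun i _ => habs i,
    sum_pairs h1 h2 f.1 (space_zero_mod2 f), space_sum_univ f]

lemma xvec_ne (h1 : 3 * k + 2 ≤ N) (h2 : N ≤ 3 * k + 3)
    (f : (indepComplexOn (pathGraph N) (modSet N)).space) : xvec h1 f ≠ 0 := by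
  intro h
  have := l1_xvec h1 h2 f
  rw [h] at this
  simp [l1] at this

/-- The forward map to the sphere. -/
noncomputable def toSph (h1 : 3 * k + 2 ≤ N) (h2 : N ≤ 3 * k + 3)
    (f : (indepComplexOn (pathGraph N) (modSet N)).space) : nSphere k :=
  ⟨‖xvec h1 f‖⁻¹ • xvec h1 f, by
    rw [mem_sphere_zero_iff_norm]
    exact norm_smul_inv_norm (xvec_ne h1 h2 f)⟩

/-- Extension of sphere coordinates to ℕ. -/
noncomputable def yext (y : EuclideanSpace ℝ (Fin (k + 1))) : ℕ → ℝ :=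
  fun i => if h : i < k + 1 then y ⟨i, h⟩ else 0

/-- The unnormalized inverse map coordinates. -/
noncomputable def Qf (y : EuclideanSpace ℝ (Fin (k + 1))) : ℕ → ℝ := fun j =>
  if j % 3 = 2 then 0 else
  if j % 3 = 0 then max (yext y (j / 3)) 0 else max (-(yext y (j / 3))) 0

lemma Qf_nonneg (y : EuclideanSpace ℝ (Fin (k + 1))) (j : ℕ) : 0 ≤ Qf y j := by
  unfold Qf
  split_ifs <;> [rfl; exact le_max_right _ _; exact le_max_right _ _]

/-- The inverse map as a raw function. -/
noncomputable def psiFun (y : EuclideanSpace ℝ (Fin (k + 1))) : Fin N → ℝ :=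
  fun m => Qf y m.val / l1 y

lemma sphere_ne_zero (y : nSphere k) : y.1 ≠ 0 := by
  intro h
  have hy := mem_sphere_zero_iff_norm.mp y.2
  rw [h, norm_zero] at hy
  exact one_ne_zero hy.symm

lemma psi_mem (h1 : 3 * k + 2 ≤ N) (h2 : N ≤ 3 * k + 3) (y : nSphere k) :
    (∀ x, 0 ≤ (psiFun y.1 : Fin N → ℝ) x) ∧
    ∃ s ∈ (indepComplexOn (pathGraph N) (modSet N)).faces,
      (∀ x, x ∉ s → psiFun y.1 x = 0) ∧ ∑ x ∈ s, psiFun y.1 x = 1 := by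
  classical
  have hS : 0 < l1 y.1 := l1_pos (sphere_ne_zero y)
  have hnonneg : ∀ m : Fin N, 0 ≤ psiFun y.1 m :=
    fun m => div_nonneg (Qf_nonneg y.1 m.val) hS.le
  have hmod2 : ∀ m : Fin N, (m : ℕ) % 3 = 2 → psiFun y.1 m = 0 := by
    intro m hm
    unfold psiFun Qf
    rw [if_pos hm, zero_div]
  refine ⟨hnonneg, Finset.univ.filter (fun m => psiFun y.1 m ≠ 0), ⟨?_, ?_⟩, ?_, ?_⟩
  · intro m hm
    rw [Finset.mem_coe, Finset.mem_filter] at hm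
    intro hm2
    exact hm.2 (hmod2 m hm2)
  · have key : ∀ p q : Fin N, (p : ℕ) + 1 = (q : ℕ) →
        psiFun y.1 p ≠ 0 → psiFun y.1 q ≠ 0 → False := by
      intro p q hpq hp hq
      have hQp : Qf y.1 p.val ≠ 0 := fun h => hp (by unfold psiFun; rw [h, zero_div])
      have hQq : Qf y.1 q.val ≠ 0 := fun h => hq (by unfold psiFun; rw [h, zero_div])
      rcases (by omega : (p : ℕ) % 3 = 0 ∨ (p : ℕ) % 3 = 1 ∨ (p : ℕ) % 3 = 2) with hp3 | hp3 | hp3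
      · have hq3 : (q : ℕ) % 3 = 1 := by omega
        have hdiv : (q : ℕ) / 3 = (p : ℕ) / 3 := by omega
        have hyp : 0 < yext y.1 ((p : ℕ) / 3) := by
          unfold Qf at hQp
          rw [if_neg (by omega), if_pos hp3] at hQp
          rcases lt_max_iff.mp (lt_of_le_of_ne (le_max_right _ _) (Ne.symm hQp)) with h | h
          · exact h
          · exact absurd h (lt_irrefl 0)
        have hyq : 0 < -(yext y.1 ((q : ℕ) / 3)) := by
          unfold Qf at hQq
          rw [if_neg (by omega), if_neg (by omega)] at hQq
          rcases lt_max_iff.mp (lt_of_le_of_ne (le_max_right _ _) (Ne.symm hQq)) with h | h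
          · exact h
          · exact absurd h (lt_irrefl 0)
        rw [hdiv] at hyq
        linarith
      · have hq3 : (q : ℕ) % 3 = 2 := by omega
        exact hQq (by unfold Qf; rw [if_pos hq3])
      · exact hQp (by unfold Qf; rw [if_pos hp3])
    intro a ha b hb hab
    rw [Finset.mem_filter] at ha hb
    rw [pathGraph_adj] at hab
    rcases hab with h | h
    · exact key a b h ha.2 hb.2
    · exact key b a h hb.2 ha.2
  · intro x hx
    rw [Finset.mem_filter] at hx
    push_neg at hx
    exact hx (Finset.mem_univ x)
  · rw [Finset.sum_filter_ne_zero]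
    rw [← sum_pairs h1 h2 (psiFun y.1) hmod2]
    have hterm : ∀ i : Fin (k + 1),
        psiFun y.1 (⟨3 * i.val, by have := i.isLt; omega⟩ : Fin N) +
        psiFun y.1 (⟨3 * i.val + 1, by have := i.isLt; omega⟩ : Fin N) =
        |y.1 i| / l1 y.1 := by
      intro i
      unfold psiFun Qf yext
      rw [if_neg (by omega : ¬ (3 * i.val) % 3 = 2), if_pos (by omega : (3 * i.val) % 3 = 0),
        if_neg (by omega : ¬ (3 * i.val + 1) % 3 = 2),
        if_neg (by omega : ¬ (3 * i.val + 1) % 3 = 0)]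
      have hd1 : (3 * i.val) / 3 = i.val := by omega
      have hd2 : (3 * i.val + 1) / 3 = i.val := by omega
      rw [hd1, hd2, dif_pos i.isLt]
      rw [← add_div, Fin.eta, max_add_max_neg]
    rw [Finset.sum_congr rfl fun i _ => hterm i, ← Finset.sum_div]
    exact div_self (ne_of_gt hS)

/-- The inverse map from the sphere. -/
noncomputable def toSpace (h1 : 3 * k + 2 ≤ N) (h2 : N ≤ 3 * k + 3) (y : nSphere k) :
    (indepComplexOn (pathGraph N) (modSet N)).space :=
  ⟨psiFun y.1, psi_mem h1 h2 y⟩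

lemma toSph_toSpace (h1 : 3 * k + 2 ≤ N) (h2 : N ≤ 3 * k + 3) (y : nSphere k) :
    toSph h1 h2 (toSpace h1 h2 y) = y := by
  have hS : 0 < l1 y.1 := l1_pos (sphere_ne_zero y)
  have hx : xvec h1 (toSpace h1 h2 y) = (l1 y.1)⁻¹ • y.1 := by
    refine PiLp.ext fun i => ?_
    show psiFun y.1 ⟨3 * i.val, by have := i.isLt; omega⟩ -
      psiFun y.1 ⟨3 * i.val + 1, by have := i.isLt; omega⟩ = ((l1 y.1)⁻¹ • y.1) i
    unfold psiFun Qf yext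
    rw [if_neg (show ¬ (3 * i.val) % 3 = 2 by omega), if_pos (show (3 * i.val) % 3 = 0 by omega),
      if_neg (show ¬ (3 * i.val + 1) % 3 = 2 by omega),
      if_neg (show ¬ (3 * i.val + 1) % 3 = 0 by omega),
      (show (3 * i.val) / 3 = i.val by omega), (show (3 * i.val + 1) / 3 = i.val by omega),
      dif_pos i.isLt, Fin.eta, div_sub_div_same, max_sub_max_neg, PiLp.smul_apply, smul_eq_mul,
      div_eq_inv_mul]
  apply Subtype.ext
  show ‖xvec h1 (toSpace h1 h2 y)‖⁻¹ • xvec h1 (toSpace h1 h2 y) = y.1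
  rw [hx, norm_smul, mem_sphere_zero_iff_norm.mp y.2, mul_one, norm_inv, Real.norm_eq_abs,
    abs_of_pos hS, inv_inv, smul_smul, mul_inv_cancel₀ (ne_of_gt hS), one_smul]

lemma toSpace_toSph (h1 : 3 * k + 2 ≤ N) (h2 : N ≤ 3 * k + 3)
    (f : (indepComplexOn (pathGraph N) (modSet N)).space) :
    toSpace h1 h2 (toSph h1 h2 f) = f := by
  apply Subtype.ext
  funext m
  have hxne := xvec_ne h1 h2 f
  have hc : (0:ℝ) < ‖xvec h1 f‖ := norm_pos_iff.mpr hxne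
  set x := xvec h1 f with hxdef
  set c := ‖x‖⁻¹ with hcdef
  have hcpos : 0 < c := inv_pos.mpr hc
  have hS : l1 (c • x) = c := by
    rw [l1_smul c x, hxdef, l1_xvec h1 h2 f, mul_one, abs_of_pos hcpos]
  show Qf (c • x) (m : ℕ) / l1 (c • x) = f.1 m
  rw [hS]
  have hmN := m.isLt
  rcases (by omega : (m : ℕ) % 3 = 0 ∨ (m : ℕ) % 3 = 1 ∨ (m : ℕ) % 3 = 2) with hm | hm | hm
  · have hi : (m : ℕ) / 3 < k + 1 := by omega
    have hQ : Qf (c • x) (m : ℕ) = max ((c • x) (⟨(m : ℕ) / 3, hi⟩ : Fin (k + 1))) 0 := by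
      unfold Qf yext
      rw [if_neg (by omega), if_pos hm, dif_pos hi]
    have hcx : (c • x) (⟨(m : ℕ) / 3, hi⟩ : Fin (k + 1)) =
        c * (f.1 (⟨3 * ((m : ℕ) / 3), by omega⟩ : Fin N) -
          f.1 (⟨3 * ((m : ℕ) / 3) + 1, by omega⟩ : Fin N)) := by
      rw [PiLp.smul_apply, smul_eq_mul]
      rfl
    have hfm : f.1 (⟨3 * ((m : ℕ) / 3), by omega⟩ : Fin N) = f.1 m :=
      congrArg f.1 (Fin.ext (by show 3 * ((m : ℕ) / 3) = (m : ℕ); omega))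
    rcases space_pair_zero h1 f (⟨(m : ℕ) / 3, hi⟩ : Fin (k + 1)) with hza | hzb
    · have hza' : f.1 (⟨3 * ((m : ℕ) / 3), by omega⟩ : Fin N) = 0 := hza
      rw [hQ, hcx, hza', zero_sub, mul_neg,
        max_eq_right (neg_nonpos.mpr (mul_nonneg hcpos.le (f.2.1 _))), zero_div,
        ← hfm, hza']
    · have hzb' : f.1 (⟨3 * ((m : ℕ) / 3) + 1, by omega⟩ : Fin N) = 0 := hzb
      rw [hQ, hcx, hzb', sub_zero, hfm,
        max_eq_left (mul_nonneg hcpos.le (f.2.1 m)),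
        mul_div_cancel_left₀ (f.1 m) (ne_of_gt hcpos)]
  · have hi : (m : ℕ) / 3 < k + 1 := by omega
    have hQ : Qf (c • x) (m : ℕ) = max (-((c • x) (⟨(m : ℕ) / 3, hi⟩ : Fin (k + 1)))) 0 := by
      unfold Qf yext
      rw [if_neg (by omega), if_neg (by omega), dif_pos hi]
    have hcx : (c • x) (⟨(m : ℕ) / 3, hi⟩ : Fin (k + 1)) =
        c * (f.1 (⟨3 * ((m : ℕ) / 3), by omega⟩ : Fin N) -
          f.1 (⟨3 * ((m : ℕ) / 3) + 1, by omega⟩ : Fin N)) := by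
      rw [PiLp.smul_apply, smul_eq_mul]
      rfl
    have hfm : f.1 (⟨3 * ((m : ℕ) / 3) + 1, by omega⟩ : Fin N) = f.1 m :=
      congrArg f.1 (Fin.ext (by show 3 * ((m : ℕ) / 3) + 1 = (m : ℕ); omega))
    rcases space_pair_zero h1 f (⟨(m : ℕ) / 3, hi⟩ : Fin (k + 1)) with hza | hzb
    · have hza' : f.1 (⟨3 * ((m : ℕ) / 3), by omega⟩ : Fin N) = 0 := hza
      rw [hQ, hcx, hza', zero_sub, mul_neg, neg_neg, hfm,
        max_eq_left (mul_nonneg hcpos.le (f.2.1 m)),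
        mul_div_cancel_left₀ (f.1 m) (ne_of_gt hcpos)]
    · have hzb' : f.1 (⟨3 * ((m : ℕ) / 3) + 1, by omega⟩ : Fin N) = 0 := hzb
      rw [hQ, hcx, hzb', sub_zero,
        max_eq_right (neg_nonpos.mpr (mul_nonneg hcpos.le (f.2.1 _))), zero_div,
        ← hfm, hzb']
  · have hQ : Qf (c • x) (m : ℕ) = 0 := by unfold Qf; rw [if_pos hm]
    rw [hQ, zero_div, space_zero_mod2 f m hm]

lemma cont_toSph (h1 : 3 * k + 2 ≤ N) (h2 : N ≤ 3 * k + 3) :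
    Continuous (toSph h1 h2 :
      (indepComplexOn (pathGraph N) (modSet N)).space → nSphere k) := by
  have hxc : Continuous fun f : (indepComplexOn (pathGraph N) (modSet N)).space =>
      xvec h1 f := by
    refine (PiLp.continuous_toLp (p := 2) (β := fun _ : Fin (k + 1) => ℝ)).comp ?_
    apply continuous_pi
    intro i
    exact (eval_cont _ _).sub (eval_cont _ _)
  refine Continuous.subtype_mk ?_ _
  exact ((continuous_norm.comp hxc).inv₀ fun f =>
    ne_of_gt (norm_pos_iff.mpr (xvec_ne h1 h2 f))).smul hxc

lemma cont_toSpace (h1 : 3 * k + 2 ≤ N) (h2 : N ≤ 3 * k + 3) :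
    Continuous (toSpace h1 h2 :
      nSphere k → (indepComplexOn (pathGraph N) (modSet N)).space) := by
  have heval : ∀ i : Fin (k + 1), Continuous fun y : nSphere k => y.1 i :=
    fun i => (PiLp.continuous_apply (p := 2) (β := fun _ : Fin (k + 1) => ℝ) i).comp continuous_subtype_val
  have hl1 : Continuous fun y : nSphere k => l1 y.1 :=
    continuous_finset_sum _ fun i _ => (heval i).abs
  refine Continuous.subtype_mk (continuous_pi fun m => ?_) _
  refine Continuous.div ?_ hl1 fun y => ne_of_gt (l1_pos (sphere_ne_zero y))
  unfold Qf yext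
  split_ifs with hc1 hc2 hc3 hc3
  · exact continuous_const
  · exact ((heval _).max continuous_const)
  · exact continuous_const.max continuous_const
  · exact ((heval _).neg.max continuous_const)
  · exact continuous_const.neg.max continuous_const

/-- The cross-polytope subcomplex is homeomorphic to the sphere. -/
noncomputable def sphereHomeo (h1 : 3 * k + 2 ≤ N) (h2 : N ≤ 3 * k + 3) :
    (indepComplexOn (pathGraph N) (modSet N)).space ≃ₜ nSphere k where
  toFun := toSph h1 h2
  invFun := toSpace h1 h2
  left_inv := toSpace_toSph h1 h2
  right_inv := toSph_toSpace h1 h2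
  continuous_toFun := cont_toSph h1 h2
  continuous_invFun := cont_toSpace h1 h2

/-- The homotopy equivalence with the sphere, for suitable `N`. -/
noncomputable def pathSphereEquiv (h1 : 3 * k + 2 ≤ N) (h2 : N ≤ 3 * k + 3)
    (j : ℕ) (hj : ∀ i, 3 * i + 2 < N → i < j) (hj2 : ∀ i, i < j → 3 * i + 2 < N) :
    ContinuousMap.HomotopyEquiv (indepComplex (pathGraph N)).space (nSphere k) :=
  ((chainEquiv N j hj2).trans
    (spaceCongr _ _ (by rw [Aset_eq_mod N j hj])).toHomotopyEquiv).trans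
    (sphereHomeo h1 h2).toHomotopyEquiv

end Sphere

/-- The independence complex of the path `L_n` (on `n+1` vertices) is
contractible if `n = 3k`, and homotopy equivalent to `S^k` if `n = 3k+1` or `n = 3k+2`. -/
theorem indep_path (k : ℕ) :
    ContractibleSpace (indepComplex (SimpleGraph.pathGraph (3 * k + 1))).space ∧
    Nonempty (ContinuousMap.HomotopyEquiv
      (indepComplex (SimpleGraph.pathGraph (3 * k + 2))).space (nSphere k)) ∧
    Nonempty (ContinuousMap.HomotopyEquiv
      (indepComplex (SimpleGraph.pathGraph (3 * k + 3))).space (nSphere k)) := by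
  refine ⟨?_, ⟨pathSphereEquiv (by omega) (by omega) k
      (fun i h => by omega) (fun i h => by omega)⟩,
    ⟨pathSphereEquiv (by omega) (by omega) (k + 1)
      (fun i h => by omega) (fun i h => by omega)⟩⟩
  have hcond : ∀ i, i < k → 3 * i + 2 < 3 * k + 1 := by omega
  haveI hcontr : ContractibleSpace
      (indepComplexOn (SimpleGraph.pathGraph (3 * k + 1)) (Aset (3 * k + 1) k)).space := by
    refine isolated_contractible _ _ ⟨3 * k, by omega⟩ ?_ ?_
    · intro i hi hc
      simp only at hc
      omega
    · intro x hx hadj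
      rw [SimpleGraph.pathGraph_adj] at hadj
      have hxlt := x.isLt
      simp only at hadj
      rcases hadj with h | h
      · omega
      · exact hx (k - 1) (by omega) (by omega)
  exact (chainEquiv (3 * k + 1) k hcond).contractibleSpace
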